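/- arXiv:0804.1081 — 4 statements merged into one kernel-verified Lean document; each statement's English description precedes it below -/
import Mathlib

section
/- The function h ↦ Γ(h) - 1/h tends to -γ as h tends to 0 along nonzero complex numbers, where Γ is the complex Gamma function and γ is the Euler–Mascheroni constant. Equivalently, lim_{h→0, h≠0} (Γ(h) - 1/h) = -γ. -/
open Filter Topology

lemma hasDerivAt_complex_Gamma_one :
    HasDerivAt Complex.Gamma (-(Real.eulerMascheroniConstant : ℂ)) 1 := by
  have hdiff : DifferentiableAt ℂ Complex.Gamma 1 :=
    Complex.differentiableAt_Gamma 1 (fun m => by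
      intro h
      have : (1 : ℂ).re = (-(m : ℂ)).re := by rw [h]
      simp at this
      linarith [Nat.cast_nonneg (α := ℝ) m])
  have hd : HasDerivAt Complex.Gamma (deriv Complex.Gamma 1) 1 := hdiff.hasDerivAt
  -- restrict to the real line
  have h1 : HasDerivAt (fun y : ℝ => Complex.Gamma y) (deriv Complex.Gamma 1) 1 := by
    exact_mod_cast hd.comp_ofReal
  have h2 : HasDerivAt (fun y : ℝ => (Real.Gamma y : ℂ))
      ((-Real.eulerMascheroniConstant : ℝ) : ℂ) 1 :=
    Real.hasDerivAt_Gamma_one.ofReal_comp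
  have h1' : HasDerivAt (fun y : ℝ => (Real.Gamma y : ℂ)) (deriv Complex.Gamma 1) 1 := by
    refine h1.congr_of_eventuallyEq ?_
    filter_upwards with y using (Complex.Gamma_ofReal y).symm
  have := h1'.unique h2
  rw [this] at hd
  simpa using hd

theorem tendsto_Gamma_sub_inv_nhdsWithin_zero :
    Tendsto (fun h : ℂ => Complex.Gamma h - 1 / h) (𝓝[≠] (0 : ℂ))
      (𝓝 (-(Real.eulerMascheroniConstant : ℂ))) := by
  have hslope := hasDerivAt_iff_tendsto_slope.mp hasDerivAt_complex_Gamma_one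
  have hmap : Tendsto (fun h : ℂ => h + 1) (𝓝[≠] (0 : ℂ)) (𝓝[≠] (1 : ℂ)) := by
    have h1 : Tendsto (fun h : ℂ => h + 1) (𝓝 (0 : ℂ)) (𝓝 (1 : ℂ)) := by
      simpa using (show Continuous (fun h : ℂ => h + 1) from continuous_id.add continuous_const).tendsto (0 : ℂ)
    refine tendsto_nhdsWithin_of_tendsto_nhds_of_eventually_within _
      (h1.mono_left nhdsWithin_le_nhds) ?_
    filter_upwards [self_mem_nhdsWithin] with h hh
    simp only [Set.mem_compl_iff, Set.mem_singleton_iff] at hh ⊢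
    exact fun hc => hh (by linear_combination hc)
  refine (hslope.comp hmap).congr' ?_
  filter_upwards [self_mem_nhdsWithin] with h (hh : h ≠ 0)
  simp only [Function.comp_apply, slope_def_field]
  rw [Complex.Gamma_add_one h hh, Complex.Gamma_one, add_sub_cancel_right]
  field_simp
end

section
/- For complex numbers z and h with Re(z) > 0 and Re(h) > 0, the Beta function satisfies the series expansion B(z, h+1) = ∑_{n=0}^{∞} (-h)_n / (n! · (z+n)), where (-h)_n is the Pochhammer symbol; equivalently, B(z,h+1) = ∑_{n=0}^{∞} (-1)^n h(h-1)···(h-n+1) / (n! · (z+n)). In particular, this series converges. -/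
open Complex MeasureTheory Set Filter

namespace BetaPochhammerAux

noncomputable def P (h : ℂ) (n : ℕ) : ℂ := Polynomial.eval (-h) (ascPochhammer ℂ n)

lemma P_succ (h : ℂ) (n : ℕ) : P h (n + 1) = P h n * ((n : ℂ) - h) := by
  rw [P, ascPochhammer_succ_right, Polynomial.eval_mul, Polynomial.eval_add,
    Polynomial.eval_X, Polynomial.eval_natCast]
  rw [P]; ring

lemma hasDerivAt_one_sub_cpow (c : ℂ) {w : ℂ} (hw : 0 < (1 - w).re) :
    HasDerivAt (fun w : ℂ => (1 - w) ^ c) (c * (1 - w) ^ (c - 1) * (-1)) w := by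
  have h1 : HasDerivAt (fun w : ℂ => 1 - w) (-1) w := by
    simpa using (hasDerivAt_id w).const_sub 1
  exact h1.cpow_const (Or.inl hw)

lemma isOpen_U : IsOpen {w : ℂ | 0 < (1 - w).re} :=
  isOpen_lt continuous_const (Complex.continuous_re.comp (continuous_const.sub continuous_id))

lemma iteratedDeriv_one_sub_cpow (h : ℂ) (n : ℕ) :
    ∀ w : ℂ, 0 < (1 - w).re →
      iteratedDeriv n (fun w : ℂ => (1 - w) ^ h) w = P h n * (1 - w) ^ (h - n) := by
  induction n with
  | zero => intro w hw; simp [P]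
  | succ n ih =>
    intro w hw
    rw [iteratedDeriv_succ]
    have hev : iteratedDeriv n (fun w : ℂ => (1 - w) ^ h)
        =ᶠ[nhds w] fun w => P h n * (1 - w) ^ (h - n) := by
      filter_upwards [isOpen_U.mem_nhds hw] with x hx using ih x hx
    rw [hev.deriv_eq]
    have hd : HasDerivAt (fun w : ℂ => P h n * (1 - w) ^ (h - n))
        (P h n * ((h - n) * (1 - w) ^ (h - n - 1) * (-1))) w :=
      (hasDerivAt_one_sub_cpow (h - n) hw).const_mul _
    rw [hd.deriv, P_succ]
    have he : h - (n + 1 : ℕ) = h - n - 1 := by push_cast; ring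
    rw [he]
    ring

/-- The binomial series. -/
lemma hasSum_one_sub_cpow (h : ℂ) {y : ℂ} (hy : ‖y‖ < 1) :
    HasSum (fun n : ℕ => P h n / n.factorial * y ^ n) ((1 - y) ^ h) := by
  obtain ⟨R, hyR, hR1, hR0⟩ : ∃ R : NNReal, ‖y‖ < R ∧ (R : ℝ) < 1 ∧ 0 < R := by
    refine ⟨⟨(‖y‖ + 1) / 2, by positivity⟩, ?_, ?_, ?_⟩
    · show ‖y‖ < (‖y‖ + 1) / 2
      linarith
    · show (‖y‖ + 1) / 2 < 1
      linarith
    · apply NNReal.coe_pos.mp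
      show (0 : ℝ) < (‖y‖ + 1) / 2
      positivity
  have hdiff : DifferentiableOn ℂ (fun w : ℂ => (1 - w) ^ h) (Metric.closedBall 0 R) := by
    intro w hw
    have hw1 : ‖w‖ ≤ R := by simpa using hw
    have hw2 : w.re ≤ ‖w‖ := Complex.re_le_norm w
    have hw' : 0 < (1 - w).re := by
      simp only [Complex.sub_re, Complex.one_re]
      linarith
    exact (hasDerivAt_one_sub_cpow h hw').differentiableAt.differentiableWithinAt
  have hps := hdiff.hasFPowerSeriesOnBall hR0
  have hmem : y ∈ Metric.eball (0 : ℂ) R := by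
    rw [Metric.mem_eball, edist_zero_right, enorm_lt_coe, ← NNReal.coe_lt_coe, coe_nnnorm]; exact hyR
  have key := hps.hasSum_iteratedFDeriv hmem
  simp only [zero_add] at key
  have hterm : ∀ n : ℕ,
      ((n.factorial : ℂ)⁻¹ • iteratedFDeriv ℂ n (fun w : ℂ => (1 - w) ^ h) 0 fun _ => y)
        = P h n / n.factorial * y ^ n := by
    intro n
    have h1 : (iteratedFDeriv ℂ n (fun w : ℂ => (1 - w) ^ h) 0 fun _ => y)
        = (∏ _i : Fin n, y) • iteratedFDeriv ℂ n (fun w : ℂ => (1 - w) ^ h) 0 fun _ => 1 := by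
      have := (iteratedFDeriv ℂ n (fun w : ℂ => (1 - w) ^ h) 0).map_smul_univ
        (fun _ : Fin n => y) (fun _ : Fin n => 1)
      simpa using this
    have h2 : iteratedDeriv n (fun w : ℂ => (1 - w) ^ h) 0 = P h n := by
      have := iteratedDeriv_one_sub_cpow h n 0 (by norm_num)
      simpa using this
    rw [h1, ← iteratedDeriv_eq_iteratedFDeriv, h2]
    simp only [Finset.prod_const, Finset.card_univ, Fintype.card_fin, smul_eq_mul]
    have : (n.factorial : ℂ) ≠ 0 := Nat.cast_ne_zero.mpr n.factorial_ne_zero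
    field_simp
  exact (funext hterm) ▸ key

/-- Summability of the coefficients. -/
lemma summable_norm_coeff (h : ℂ) (hh : 0 < h.re) :
    Summable (fun n : ℕ => ‖P h n / n.factorial‖) := by
  have hfac : ∀ n : ℕ, ‖P h n / (n.factorial : ℂ)‖ = ‖P h n‖ / (n.factorial : ℝ) := by
    intro n
    rw [norm_div]
    norm_num
  simp only [hfac]
  set a : ℝ := min h.re 1 with ha_def
  have ha0 : 0 < a := lt_min hh one_pos
  have ha1 : a ≤ 1 := min_le_right _ _
  have hah : a ≤ h.re := min_le_left _ _
  set s : ℝ := 1 + a / 2 with hs_def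
  have hs1 : 1 < s := by rw [hs_def]; linarith
  have hs2 : s ≤ 2 := by rw [hs_def]; linarith
  set c : ℕ → ℝ := fun n => ‖P h n‖ / (n.factorial : ℝ) with hc_def
  have hc0 : ∀ n, 0 ≤ c n := fun n => by
    have := norm_nonneg (P h n)
    have : (0:ℝ) < n.factorial := by exact_mod_cast n.factorial_pos
    positivity
  have hcsucc : ∀ n : ℕ, c (n + 1) = c n * (‖(n : ℂ) - h‖ / ((n : ℝ) + 1)) := by
    intro n
    have hfne : ((n.factorial : ℝ)) ≠ 0 := by exact_mod_cast n.factorial_ne_zero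
    have hn1 : ((n : ℝ) + 1) ≠ 0 := by positivity
    simp only [hc_def, P_succ, Nat.factorial_succ, norm_mul]
    push_cast
    rw [div_mul_div_comm, mul_comm ((n : ℝ) + 1)]
  -- choose N
  obtain ⟨N, hN⟩ : ∃ N : ℕ, ∀ n : ℕ, N ≤ n →
      ‖(n : ℂ) - h‖ ≤ ((n : ℝ) + 1) * (1 - s / ((n : ℝ) + 2)) := by
    refine ⟨⌈max h.re ((h.im ^ 2 + 3 * a ^ 2 / 4) / a)⌉₊, fun n hn => ?_⟩
    have hn1 : h.re ≤ (n : ℝ) :=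
      le_trans (le_max_left _ _) (le_trans (Nat.le_ceil _) (Nat.cast_le.mpr hn))
    have hn2 : (h.im ^ 2 + 3 * a ^ 2 / 4) / a ≤ (n : ℝ) :=
      le_trans (le_max_right _ _) (le_trans (Nat.le_ceil _) (Nat.cast_le.mpr hn))
    have hn2' : h.im ^ 2 + 3 * a ^ 2 / 4 ≤ a * n := by
      rw [div_le_iff₀ ha0] at hn2; linarith
    have hsq : ‖(n : ℂ) - h‖ ^ 2 = ((n : ℝ) - h.re) ^ 2 + h.im ^ 2 := by
      rw [Complex.sq_norm, Complex.normSq_apply, Complex.sub_re,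
        Complex.sub_im, Complex.natCast_re, Complex.natCast_im]
      ring
    have step1 : ‖(n : ℂ) - h‖ ≤ (n : ℝ) - a / 2 := by
      have hb : (0 : ℝ) ≤ (n : ℝ) - a / 2 := by linarith
      have hsq2 : ‖(n : ℂ) - h‖ ^ 2 ≤ ((n : ℝ) - a / 2) ^ 2 := by
        rw [hsq]
        nlinarith [sq_nonneg ((n : ℝ) - h.re)]
      calc ‖(n : ℂ) - h‖ = Real.sqrt (‖(n : ℂ) - h‖ ^ 2) :=
            (Real.sqrt_sq (norm_nonneg _)).symm
        _ ≤ Real.sqrt (((n : ℝ) - a / 2) ^ 2) := Real.sqrt_le_sqrt hsq2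
        _ = (n : ℝ) - a / 2 := Real.sqrt_sq hb
    have step2 : (n : ℝ) - a / 2 ≤ ((n : ℝ) + 1) * (1 - s / ((n : ℝ) + 2)) := by
      have hn2pos : (0 : ℝ) < (n : ℝ) + 2 := by positivity
      have hkey : s * (((n : ℝ) + 1) / ((n : ℝ) + 2)) ≤ s := by
        rw [mul_le_iff_le_one_right (by linarith)]
        rw [div_le_one hn2pos]; linarith
      have hexp : ((n : ℝ) + 1) * (1 - s / ((n : ℝ) + 2))
          = (n : ℝ) + 1 - s * (((n : ℝ) + 1) / ((n : ℝ) + 2)) := by ring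
      rw [hexp, hs_def] at *
      linarith
    linarith
  -- d is antitone from N on
  set d : ℕ → ℝ := fun n => c n * ((n : ℝ) + 1) ^ s with hd_def
  have hd0 : ∀ n, 0 ≤ d n := fun n => by
    have : (0:ℝ) < ((n : ℝ) + 1) ^ s := Real.rpow_pos_of_pos (by positivity) _
    have := hc0 n
    positivity
  have hdmono : ∀ n : ℕ, N ≤ n → d (n + 1) ≤ d n := by
    intro n hn
    have hn2pos : (0 : ℝ) < (n : ℝ) + 2 := by positivity
    have hn1pos : (0 : ℝ) < (n : ℝ) + 1 := by positivity
    have hBern : 1 - s / ((n : ℝ) + 2) ≤ (((n : ℝ) + 1) / ((n : ℝ) + 2)) ^ s := by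
      have hu : (-1 : ℝ) ≤ -(1 / ((n : ℝ) + 2)) := by
        rw [neg_le_neg_iff]
        rw [div_le_one hn2pos]; linarith
      have hB := one_add_mul_self_le_rpow_one_add hu hs1.le
      have h1u : 1 + -(1 / ((n : ℝ) + 2)) = ((n : ℝ) + 1) / ((n : ℝ) + 2) := by
        field_simp
        ring
      rw [h1u] at hB
      calc 1 - s / ((n : ℝ) + 2) = 1 + s * -(1 / ((n : ℝ) + 2)) := by ring
        _ ≤ _ := hB
    have hrw : d (n + 1) = c n * (‖(n : ℂ) - h‖ / ((n : ℝ) + 1)) * ((n : ℝ) + 2) ^ s := by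
      rw [hd_def]
      simp only [hcsucc n]
      push_cast
      ring_nf
    rw [hrw, hd_def]
    have hstep : ‖(n : ℂ) - h‖ / ((n : ℝ) + 1) ≤ 1 - s / ((n : ℝ) + 2) := by
      rw [div_le_iff₀ hn1pos]
      have := hN n hn
      linarith [hN n hn]
    calc c n * (‖(n : ℂ) - h‖ / ((n : ℝ) + 1)) * ((n : ℝ) + 2) ^ s
        ≤ c n * ((((n : ℝ) + 1) / ((n : ℝ) + 2)) ^ s) * ((n : ℝ) + 2) ^ s := by
          apply mul_le_mul_of_nonneg_right _ (Real.rpow_nonneg hn2pos.le _)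
          exact mul_le_mul_of_nonneg_left (hstep.trans hBern) (hc0 n)
      _ = c n * ((n : ℝ) + 1) ^ s := by
          rw [mul_assoc, ← Real.mul_rpow (by positivity) hn2pos.le,
            div_mul_cancel₀ _ hn2pos.ne']
  have hant : ∀ m : ℕ, d (N + m) ≤ d N := by
    intro m
    induction m with
    | zero => simp
    | succ m ih =>
      have := hdmono (N + m) (Nat.le_add_right _ _)
      calc d (N + (m + 1)) = d ((N + m) + 1) := by ring_nf
        _ ≤ d (N + m) := this
        _ ≤ d N := ih
  have hsum0 : Summable (fun n : ℕ => ((n : ℝ) + 1) ^ (-s)) := by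
    have h1 : Summable (fun n : ℕ => (n : ℝ) ^ (-s)) :=
      Real.summable_nat_rpow.mpr (by linarith)
    have h2 := (summable_nat_add_iff 1).mpr h1
    simpa [Nat.cast_add, Nat.cast_one] using h2
  have hsummain : Summable (fun m : ℕ => c (m + N)) := by
    apply Summable.of_nonneg_of_le (fun m => hc0 _) (fun m => ?_) (hsum0.mul_left (d N))
    have h1 : d (N + m) ≤ d N := hant m
    have hbase : (0:ℝ) < ((N + m : ℕ) : ℝ) + 1 := by positivity
    have h2 : c (N + m) = d (N + m) * (((N + m : ℕ) : ℝ) + 1) ^ (-s) := by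
      rw [hd_def]
      rw [mul_assoc, ← Real.rpow_add hbase, add_neg_cancel, Real.rpow_zero, mul_one]
    have h3 : (((N + m : ℕ) : ℝ) + 1) ^ (-s) ≤ ((m : ℝ) + 1) ^ (-s) := by
      apply Real.rpow_le_rpow_of_nonpos (by positivity) _ (by linarith)
      push_cast
      linarith
    rw [add_comm m N, h2]
    exact mul_le_mul h1 h3 (Real.rpow_nonneg hbase.le _) (hd0 N)
  exact (summable_nat_add_iff N).mp hsummain

end BetaPochhammerAux

open BetaPochhammerAux

theorem betaIntegral_succ_hasSum_pochhammer (z h : ℂ) (hz : 0 < z.re) (hh : 0 < h.re) :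
    HasSum (fun n : ℕ =>
        Polynomial.eval (-h) (ascPochhammer ℂ n) / ((n.factorial : ℂ) * (z + n)))
      (Complex.betaIntegral z (h + 1)) := by
  set F : ℕ → ℝ → ℂ := fun n x => P h n / n.factorial * (x : ℂ) ^ (z - 1 + n) with hF
  have hre : ∀ n : ℕ, (-1 : ℝ) < (z - 1 + n).re := by
    intro n
    simp only [Complex.add_re, Complex.sub_re, Complex.one_re, Complex.natCast_re]
    have : (0:ℝ) ≤ n := Nat.cast_nonneg n
    linarith
  have hznre : ∀ n : ℕ, 0 < (z + n).re := by
    intro n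
    simp only [Complex.add_re, Complex.natCast_re]
    have : (0:ℝ) ≤ n := Nat.cast_nonneg n
    linarith
  have hzn : ∀ n : ℕ, z + n ≠ 0 := by
    intro n h0
    have := hznre n
    rw [h0] at this
    simp at this
  have hint : ∀ n, IntegrableOn (F n) (Ioc (0:ℝ) 1) volume := by
    intro n
    have h1 : IntervalIntegrable (fun x : ℝ => (x : ℂ) ^ (z - 1 + n)) volume 0 1 :=
      intervalIntegral.intervalIntegrable_cpow' (hre n)
    have h2 := h1.const_mul (P h n / n.factorial)
    rwa [intervalIntegrable_iff_integrableOn_Ioc_of_le zero_le_one] at h2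
  have hval : ∀ n : ℕ, ∫ x in Ioc (0:ℝ) 1, F n x
      = P h n / ((n.factorial : ℂ) * (z + n)) := by
    intro n
    rw [← intervalIntegral.integral_of_le zero_le_one]
    simp only [hF]
    rw [intervalIntegral.integral_const_mul, integral_cpow (Or.inl (hre n))]
    have he : z - 1 + (n : ℂ) + 1 = z + n := by ring
    rw [he]
    rw [Complex.ofReal_one, Complex.ofReal_zero, Complex.one_cpow, Complex.zero_cpow (hzn n),
      sub_zero]
    rw [div_mul_div_comm, mul_one]
  have hnormval : ∀ n : ℕ, ∫ x in Ioc (0:ℝ) 1, ‖F n x‖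
      = ‖P h n / (n.factorial : ℂ)‖ * (1 / (z.re + n)) := by
    intro n
    have hcongr : ∀ x ∈ Ioc (0:ℝ) 1,
        ‖F n x‖ = ‖P h n / (n.factorial : ℂ)‖ * x ^ (z.re - 1 + n) := by
      intro x hx
      simp only [hF, norm_mul]
      congr 1
      rw [Complex.norm_cpow_eq_rpow_re_of_pos hx.1]
      congr 1
    rw [setIntegral_congr_fun measurableSet_Ioc hcongr, integral_const_mul]
    congr 1
    rw [← intervalIntegral.integral_of_le zero_le_one]
    have hre' : (-1:ℝ) < z.re - 1 + n := by
      have : (0:ℝ) ≤ n := Nat.cast_nonneg n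
      linarith
    rw [integral_rpow (Or.inl hre')]
    have he : z.re - 1 + (n : ℝ) + 1 = z.re + n := by ring
    rw [he, Real.one_rpow, Real.zero_rpow (by positivity), sub_zero]
  have hsumnorm : Summable (fun n : ℕ => ∫ x in Ioc (0:ℝ) 1, ‖F n x‖) := by
    apply Summable.of_nonneg_of_le
      (fun n => integral_nonneg fun x => norm_nonneg _)
      (fun n => ?_) ((summable_norm_coeff h hh).mul_right z.re⁻¹)
    rw [hnormval n]
    apply mul_le_mul_of_nonneg_left _ (norm_nonneg _)
    rw [one_div]
    apply inv_anti₀ hz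
    have : (0:ℝ) ≤ n := Nat.cast_nonneg n
    linarith
  have key := MeasureTheory.hasSum_integral_of_summable_integral_norm
    (μ := volume.restrict (Ioc (0:ℝ) 1)) (F := F) hint hsumnorm
  simp only [hval] at key
  have hvalue : (∫ x in Ioc (0:ℝ) 1, ∑' n, F n x) = Complex.betaIntegral z (h + 1) := by
    rw [Complex.betaIntegral]
    rw [intervalIntegral.integral_of_le zero_le_one]
    rw [show h + 1 - 1 = h by ring]
    rw [integral_Ioc_eq_integral_Ioo, integral_Ioc_eq_integral_Ioo]
    apply setIntegral_congr_fun measurableSet_Ioo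
    intro x hx
    have hx0 : (0:ℝ) < x := hx.1
    have hx1 : x < 1 := hx.2
    have hxc : ‖(x:ℂ)‖ < 1 := by
      rw [Complex.norm_real, Real.norm_eq_abs, abs_of_pos hx0]
      exact hx1
    have hs := (hasSum_one_sub_cpow h hxc).mul_left ((x:ℂ) ^ (z - 1))
    have hfe : ∀ n : ℕ, (x:ℂ) ^ (z - 1) * (P h n / n.factorial * (x:ℂ) ^ n) = F n x := by
      intro n
      simp only [hF]
      rw [Complex.cpow_add _ _ (by exact_mod_cast hx0.ne' : (x:ℂ) ≠ 0)]
      rw [Complex.cpow_natCast]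
      ring
    have hs' : HasSum (fun n => F n x) ((x:ℂ) ^ (z - 1) * (1 - (x:ℂ)) ^ h) :=
      (funext hfe) ▸ hs
    exact hs'.tsum_eq
  rw [hvalue] at key
  exact key
end

section
/- The function h ↦ Γ(h) - 1/h, defined for positive real h, tends to -γ as h tends to 0 from the right, where Γ is the real Gamma function and γ is the Euler–Mascheroni constant. -/
open Filter Topology

theorem tendsto_real_Gamma_sub_inv_nhdsWithin_zero :
    Tendsto (fun h : ℝ => Real.Gamma h - 1 / h) (𝓝[>] (0 : ℝ))
      (𝓝 (-Real.eulerMascheroniConstant)) := by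
  have hd := Real.hasDerivAt_Gamma_one
  rw [hasDerivAt_iff_tendsto_slope] at hd
  have hd' : Tendsto (slope Real.Gamma 1) (𝓝[>] (1 : ℝ)) (𝓝 (-Real.eulerMascheroniConstant)) :=
    hd.mono_left (nhdsWithin_mono _ fun x hx => ne_of_gt hx)
  have hmap : Tendsto (fun h : ℝ => h + 1) (𝓝[>] (0 : ℝ)) (𝓝[>] (1 : ℝ)) := by
    refine tendsto_nhdsWithin_of_tendsto_nhds_of_eventually_within _
      (by have h1 : Tendsto (fun x : ℝ => x + 1) (𝓝[>] (0 : ℝ)) (𝓝 (0 + 1)) := (((continuous_id.add continuous_const).tendsto (0 : ℝ)).mono_left nhdsWithin_le_nhds); simpa using h1) ?_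
    filter_upwards [self_mem_nhdsWithin] with x (hx : 0 < x)
    exact Set.mem_Ioi.mpr (by linarith)
  have := hd'.comp hmap
  apply this.congr'
  filter_upwards [self_mem_nhdsWithin] with h (hh : 0 < h)
  simp only [Function.comp, slope_def_field, Real.Gamma_one]
  rw [Real.Gamma_add_one (ne_of_gt hh)]
  field_simp
  linear_combination (h * Real.Gamma h - 1) * mul_inv_cancel₀ (ne_of_gt hh)
end

section
/- For every real number x > 0, the logarithmic derivative of the real Gamma function satisfies Γ'(x)/Γ(x) = -γ - ∑_{n=1}^{∞} (1-x)_n / (n · n!), where (1-x)_n is the Pochhammer symbol and γ is the Euler–Mascheroni constant. In particular, the series on the right-hand side converges. -/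
open Real Filter Topology Finset

namespace DGAux

noncomputable def c (x : ℝ) (n : ℕ) : ℝ :=
  Polynomial.eval (1 - x) (ascPochhammer ℝ n) / n.factorial

lemma c_zero (x : ℝ) : c x 0 = 1 := by simp [c]

lemma c_succ (x : ℝ) (n : ℕ) : c x (n + 1) = c x n * ((n + 1 - x) / (n + 1)) := by
  have h : (n.factorial : ℝ) ≠ 0 := Nat.cast_ne_zero.mpr n.factorial_ne_zero
  rw [c, c, ascPochhammer_succ_eval, Nat.factorial_succ]
  push_cast
  field_simp
  ring

/-- telescoping sums of antitone nonneg null sequences -/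
lemma hasSum_telescope {u : ℕ → ℝ} (hmono : ∀ n, u (n + 1) ≤ u n)
    (hnn : ∀ n, 0 ≤ u n) (hlim : Tendsto u atTop (𝓝 0)) :
    HasSum (fun n => u n - u (n + 1)) (u 0) := by
  have hps : ∀ N, ∑ i ∈ range N, (u i - u (i + 1)) = u 0 - u N := by
    intro N; exact Finset.sum_range_sub' u N
  have hsum : Summable (fun n => u n - u (n + 1)) := by
    apply summable_of_sum_range_le (c := u 0) (fun n => by linarith [hmono n])
    intro N; rw [hps]; linarith [hnn N]
  have h1 := hsum.hasSum.tendsto_sum_nat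
  have h2 : Tendsto (fun N => ∑ i ∈ range N, (u i - u (i + 1))) atTop (𝓝 (u 0)) := by
    simp only [hps]
    simpa using (tendsto_const_nhds (x := u 0)).sub hlim
  have := hsum.hasSum
  rwa [tendsto_nhds_unique h1 h2] at this

lemma c_factor_mem {x : ℝ} (hx : 0 < x) {n : ℕ} (hn : x ≤ n + 1) :
    0 ≤ (n + 1 - x) / (n + 1) ∧ (n + 1 - x) / (n + 1) ≤ 1 := by
  have h1 : (0:ℝ) < n + 1 := by positivity
  constructor
  · apply div_nonneg (by linarith) h1.le
  · rw [div_le_one h1]; linarith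

lemma abs_c_succ {x : ℝ} (hx : 0 < x) {n : ℕ} (hn : x ≤ n + 1) :
    |c x (n + 1)| = |c x n| * ((n + 1 - x) / (n + 1)) := by
  rw [c_succ, abs_mul, abs_of_nonneg (c_factor_mem hx hn).1]

lemma c_tendsto_zero {x : ℝ} (hx : 0 < x) : Tendsto (c x) atTop (𝓝 0) := by
  set m0 : ℕ := ⌈x⌉₊ with hm0
  have hxm : ∀ n : ℕ, x ≤ ((n + m0 : ℕ) : ℝ) + 1 := by
    intro n
    have := Nat.le_ceil x
    push_cast
    linarith
  set u : ℕ → ℝ := fun n => |c x (n + m0)| with hu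
  have humono : ∀ n, u (n + 1) ≤ u n := by
    intro n
    have h := abs_c_succ hx (hxm n)
    have h2 := c_factor_mem hx (hxm n)
    have : n + 1 + m0 = (n + m0) + 1 := by ring
    rw [hu]
    simp only [this, h]
    calc |c x (n + m0)| * ((↑(n + m0) + 1 - x) / (↑(n + m0) + 1)) ≤ |c x (n + m0)| * 1 := by
          apply mul_le_mul_of_nonneg_left h2.2 (abs_nonneg _)
      _ = _ := mul_one _
  have hunn : ∀ n, 0 ≤ u n := fun n => abs_nonneg _
  have hanti : Antitone u := antitone_nat_of_succ_le humono
  have hbdd : BddBelow (Set.range u) := ⟨0, fun y ⟨n, hn⟩ => hn ▸ hunn n⟩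
  have hulim : Tendsto u atTop (𝓝 (⨅ n, u n)) := tendsto_atTop_ciInf hanti hbdd
  have hLnn : 0 ≤ ⨅ n, u n := le_ciInf hunn
  have hL0 : (⨅ n, u n) = 0 := by
    by_contra hL
    have hLpos : 0 < ⨅ n, u n := lt_of_le_of_ne hLnn (Ne.symm hL)
    set L := ⨅ n, u n
    -- u n - u (n+1) = u n * (x / (n + m0 + 1)) ≥ L * x / (n + m0 + 1)
    have hdiff : ∀ n, u n - u (n + 1) = u n * (x / (↑(n + m0) + 1)) := by
      intro n
      have h := abs_c_succ hx (hxm n)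
      have : n + 1 + m0 = (n + m0) + 1 := by ring
      rw [hu]; simp only [this, h]
      have hpos : (0:ℝ) < ↑(n + m0) + 1 := by positivity
      field_simp
      ring
    have hsumT : Summable (fun n => u n - u (n + 1)) := by
      apply summable_of_sum_range_le (c := u 0)
      · intro n; rw [hdiff]; positivity
      · intro N; rw [Finset.sum_range_sub' u N]; linarith [hunn N]
    have hge : ∀ n, L * (x / (↑(n + m0) + 1)) ≤ u n - u (n + 1) := by
      intro n
      rw [hdiff]
      apply mul_le_mul_of_nonneg_right _ (by positivity)
      exact ciInf_le hbdd n
    have hsum2 : Summable (fun n : ℕ => L * (x / (↑(n + m0) + 1))) :=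
      Summable.of_nonneg_of_le (fun n => by positivity) hge hsumT
    have hsum3 : Summable (fun n : ℕ => ((n : ℝ) + ↑m0 + 1)⁻¹) := by
      have := hsum2.mul_left ((L * x)⁻¹)
      have hne : L * x ≠ 0 := by positivity
      refine this.congr (fun n => ?_)
      push_cast
      field_simp
    have hsum4 : Summable (fun n : ℕ => ((n : ℝ))⁻¹) := by
      rw [← summable_nat_add_iff (m0 + 1)]
      refine hsum3.congr (fun n => ?_)
      push_cast
      ring_nf
    exact Real.not_summable_natCast_inv hsum4
  rw [hL0] at hulim
  have : Tendsto (fun n => |c x n|) atTop (𝓝 0) := by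
    rw [← tendsto_add_atTop_iff_nat m0]
    exact hulim
  exact squeeze_zero_norm (fun n => le_of_eq rfl) this

lemma waring {x : ℝ} (hx : 0 < x) : HasSum (fun m : ℕ => c x m / (m + 1)) x⁻¹ := by
  have hdiff : ∀ m : ℕ, (c x m - c x (m + 1)) * x⁻¹ = c x m / (m + 1) := by
    intro m
    rw [c_succ]
    have h1 : (0:ℝ) < (m:ℝ) + 1 := by positivity
    field_simp
    ring
  set m0 : ℕ := ⌈x⌉₊ with hm0
  have hxm : ∀ n : ℕ, x ≤ ((n + m0 : ℕ) : ℝ) + 1 := by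
    intro n; have := Nat.le_ceil x; push_cast; linarith
  -- summability
  have habs : ∀ n : ℕ, |c x (n + m0) - c x (n + m0 + 1)| = |c x (n + m0)| - |c x (n + m0 + 1)| := by
    intro n
    rw [abs_c_succ hx (hxm n), c_succ]
    have h2 := c_factor_mem hx (hxm n)
    rw [← mul_one_sub, abs_mul, abs_of_nonneg (by linarith [h2.2] : (0:ℝ) ≤ 1 - (↑(n + m0) + 1 - x) / (↑(n + m0) + 1)), mul_one_sub]
  have hsumabs : Summable (fun n : ℕ => |c x (n + m0) - c x (n + m0 + 1)|) := by
    apply summable_of_sum_range_le (c := |c x m0|)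
    · intro n; exact abs_nonneg _
    · intro N
      calc ∑ i ∈ range N, |c x (i + m0) - c x (i + m0 + 1)|
          = ∑ i ∈ range N, ((fun i => |c x (i + m0)|) i - (fun i => |c x (i + m0)|) (i + 1)) := by
            apply Finset.sum_congr rfl; intro i _
            simp only [habs i]
            congr 2
            ring_nf
        _ = |c x (0 + m0)| - |c x (N + m0)| := Finset.sum_range_sub' _ N
        _ ≤ |c x m0| := by simp only [Nat.zero_add]; linarith [abs_nonneg (c x (N + m0))]
  have hsum : Summable (fun m : ℕ => (c x m - c x (m + 1)) * x⁻¹) := by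
    apply Summable.mul_right
    rw [← summable_nat_add_iff m0]
    apply Summable.of_abs
    refine hsumabs.congr (fun n => ?_)
    congr 2 <;> ring_nf
  have h1 := hsum.hasSum.tendsto_sum_nat
  have h2 : Tendsto (fun N => ∑ i ∈ range N, (c x i - c x (i + 1)) * x⁻¹) atTop (𝓝 x⁻¹) := by
    have : ∀ N, ∑ i ∈ range N, (c x i - c x (i + 1)) * x⁻¹ = (c x 0 - c x N) * x⁻¹ := by
      intro N; rw [← Finset.sum_mul, Finset.sum_range_sub' (c x) N]
    simp only [this, c_zero]
    have := ((tendsto_const_nhds (x := (1:ℝ))).sub (c_tendsto_zero hx)).mul_const x⁻¹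
    simpa using this
  have := hsum.hasSum
  rw [tendsto_nhds_unique h1 h2] at this
  exact this.congr_fun (fun m => (hdiff m).symm)



lemma gamma_diff {y : ℝ} (hy : 0 < y) : DifferentiableAt ℝ Real.Gamma y :=
  Real.differentiableAt_Gamma fun m => by
    intro h; rw [h] at hy; have : (0:ℝ) ≤ m := m.cast_nonneg; linarith

lemma f_diff {y : ℝ} (hy : 0 < y) : DifferentiableAt ℝ (Real.log ∘ Real.Gamma) y :=
  (gamma_diff hy).log (Real.Gamma_pos_of_pos hy).ne'

lemma f_rec {y : ℝ} (hy : 0 < y) :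
    (Real.log ∘ Real.Gamma) (y + 1) = (Real.log ∘ Real.Gamma) y + Real.log y := by
  simp only [Function.comp_apply, Real.Gamma_add_one hy.ne',
    Real.log_mul hy.ne' (Real.Gamma_pos_of_pos hy).ne', add_comm]

lemma fder_rec {y : ℝ} (hy : 0 < y) :
    deriv (Real.log ∘ Real.Gamma) (y + 1) = deriv (Real.log ∘ Real.Gamma) y + 1 / y := by
  rw [← deriv_comp_add_const, one_div, ← Real.deriv_log,
    ← deriv_add (f_diff hy) (Real.differentiableAt_log hy.ne')]
  apply Filter.EventuallyEq.deriv_eq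
  filter_upwards [eventually_gt_nhds hy] using fun z hz => f_rec hz

lemma fder_shift {x : ℝ} (hx : 0 < x) (n : ℕ) :
    deriv (Real.log ∘ Real.Gamma) (x + n) =
      deriv (Real.log ∘ Real.Gamma) x + ∑ k ∈ range n, 1 / (x + k) := by
  induction n with
  | zero => simp
  | succ n ih =>
    have h1 : x + (n + 1 : ℕ) = (x + n) + 1 := by push_cast; ring
    rw [h1, fder_rec (by positivity), ih, Finset.sum_range_succ]
    ring

lemma fder_between {x : ℝ} (hx : 0 < x) (n : ℕ) :
    Real.log (x + n) ≤ deriv (Real.log ∘ Real.Gamma) (x + n + 1) ∧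
      deriv (Real.log ∘ Real.Gamma) (x + n + 1) ≤ Real.log (x + n + 1) := by
  have hc := Real.convexOn_log_Gamma
  have h0 : (0:ℝ) < x + n := by positivity
  have h1 : (0:ℝ) < x + n + 1 := by positivity
  have h2 : (0:ℝ) < x + n + 2 := by positivity
  constructor
  · refine (le_of_eq ?_).trans <| hc.slope_le_deriv (Set.mem_Ioi.mpr h0)
      (Set.mem_Ioi.mpr h1) (by linarith) (f_diff h1)
    rw [slope_def_field, show x + n + 1 - (x + n) = (1:ℝ) by ring, div_one,
      f_rec h0, add_sub_cancel_left]
  · refine (hc.deriv_le_slope (Set.mem_Ioi.mpr h1) (Set.mem_Ioi.mpr h2)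
      (by linarith) (f_diff h1)).trans (le_of_eq ?_)
    rw [slope_def_field, show x + n + 2 - (x + n + 1) = (1:ℝ) by ring, div_one,
      show x + n + 2 = (x + n + 1) + 1 by ring, f_rec h1, add_sub_cancel_left]

lemma tendsto_aux (cst : ℝ) : Tendsto (fun n : ℕ => cst / ((n:ℝ) + 1)) atTop (𝓝 0) := by
  have h := tendsto_const_div_atTop_nhds_zero_nat cst
  rw [← tendsto_add_atTop_iff_nat 1] at h
  refine h.congr fun n => by push_cast; ring

lemma fder_sub_log {x : ℝ} (hx : 0 < x) :
    Tendsto (fun n : ℕ => deriv (Real.log ∘ Real.Gamma) (x + n + 1) - Real.log (n + 1))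
      atTop (𝓝 0) := by
  have hlog : ∀ cst : ℝ, Tendsto (fun n : ℕ => Real.log ((cst + (n + 1)) / (n + 1)))
      atTop (𝓝 0) := by
    intro cst
    have hq : Tendsto (fun n : ℕ => (cst + ((n:ℝ) + 1)) / ((n:ℝ) + 1)) atTop (𝓝 1) := by
      have he : ∀ n : ℕ, (cst + ((n:ℝ) + 1)) / ((n:ℝ) + 1) = cst / ((n:ℝ) + 1) + 1 := by
        intro n
        have hne : ((n:ℝ) + 1) ≠ 0 := by positivity
        field_simp
      simp only [he]
      simpa using (tendsto_aux cst).add_const 1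
    have := (Real.continuousAt_log one_ne_zero).tendsto.comp hq
    simpa [Function.comp_def] using this
  refine tendsto_of_tendsto_of_tendsto_of_le_of_le (hlog (x - 1)) (hlog x) ?_ ?_
  · intro n
    have h0 : (0:ℝ) < x + n := by positivity
    have h1 : (0:ℝ) < (n:ℝ) + 1 := by positivity
    dsimp only
    rw [show x - 1 + ((n:ℝ) + 1) = x + n by ring, Real.log_div h0.ne' h1.ne']
    have := (fder_between hx n).1
    linarith
  · intro n
    have h0 : (0:ℝ) < x + n + 1 := by positivity
    have h1 : (0:ℝ) < (n:ℝ) + 1 := by positivity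
    dsimp only
    rw [show x + ((n:ℝ) + 1) = x + n + 1 by ring, Real.log_div h0.ne' h1.ne']
    have := (fder_between hx n).2
    linarith

lemma summable_inv_series {x : ℝ} (hx : 0 < x) :
    Summable (fun k : ℕ => 1 / ((k : ℝ) + 1) - 1 / (x + k)) := by
  rw [← summable_nat_add_iff 1]
  apply Summable.of_abs
  have hb : Summable (fun k : ℕ => |1 - x| * (1 / ((k:ℝ) + 1) ^ 2)) := by
    apply Summable.mul_left
    have := Real.summable_one_div_nat_pow.mpr (one_lt_two)
    rw [← summable_nat_add_iff 1] at this
    refine this.congr fun n => by push_cast; ring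
  refine Summable.of_nonneg_of_le (fun k => abs_nonneg _) (fun k => ?_) hb
  have h1 : (0:ℝ) < (k:ℝ) + 1 + 1 := by positivity
  have h2 : (0:ℝ) < x + ((k:ℝ) + 1) := by positivity
  have heq : 1 / ((k:ℝ) + 1 + 1) - 1 / (x + ((k:ℝ) + 1)) =
      (x - 1) / (((k:ℝ) + 2) * (x + k + 1)) := by
    field_simp
    ring
  push_cast
  rw [heq, abs_div]
  rw [abs_of_pos (by positivity : (0:ℝ) < ((k:ℝ) + 2) * (x + k + 1))]
  have hnum : |x - 1| = |1 - x| := abs_sub_comm x 1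
  rw [hnum, div_le_iff₀ (by positivity)]
  have hk1 : ((k:ℝ) + 1) ^ 2 ≤ ((k:ℝ) + 2) * (x + k + 1) := by nlinarith [k.cast_nonneg (α := ℝ)]
  calc |1 - x| * (1 / ((k:ℝ) + 1) ^ 2) * (((k:ℝ) + 2) * (x + k + 1))
      = |1 - x| * ((((k:ℝ) + 2) * (x + k + 1)) / ((k:ℝ) + 1) ^ 2) := by ring
    _ ≥ |1 - x| * 1 := by
        apply mul_le_mul_of_nonneg_left _ (abs_nonneg _)
        rw [le_div_iff₀ (by positivity)]
        linarith
    _ = |1 - x| := mul_one _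

lemma harmonic_cast (n : ℕ) : ((harmonic n : ℚ) : ℝ) = ∑ i ∈ range n, 1 / ((i : ℝ) + 1) := by
  rw [harmonic]
  push_cast
  apply Finset.sum_congr rfl
  intro i _
  rw [one_div]

lemma hasSum_inv_series {x : ℝ} (hx : 0 < x) :
    HasSum (fun k : ℕ => 1 / ((k : ℝ) + 1) - 1 / (x + k))
      (Real.eulerMascheroniConstant + deriv (Real.log ∘ Real.Gamma) x) := by
  have hsum := summable_inv_series hx
  have h1 := hsum.hasSum.tendsto_sum_nat
  have h2 : Tendsto (fun N : ℕ => ∑ k ∈ range N, (1 / ((k : ℝ) + 1) - 1 / (x + k))) atTop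
      (𝓝 (Real.eulerMascheroniConstant + deriv (Real.log ∘ Real.Gamma) x)) := by
    rw [← tendsto_add_atTop_iff_nat 1]
    have key : ∀ N : ℕ, ∑ k ∈ range (N + 1), (1 / ((k : ℝ) + 1) - 1 / (x + k)) =
        (((harmonic (N + 1) : ℚ) : ℝ) - Real.log (N + 1)) -
          (deriv (Real.log ∘ Real.Gamma) (x + N + 1) - Real.log (N + 1)) +
          deriv (Real.log ∘ Real.Gamma) x := by
      intro N
      rw [Finset.sum_sub_distrib, harmonic_cast]
      have := fder_shift hx (N + 1)
      push_cast at this ⊢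
      rw [show x + (N + 1 : ℝ) = x + N + 1 by ring] at this
      rw [this]
      ring
    simp only [key]
    have hg := Real.tendsto_harmonic_sub_log
    rw [← tendsto_add_atTop_iff_nat 1] at hg
    have hg' : Tendsto (fun N : ℕ => ((harmonic (N + 1) : ℚ) : ℝ) - Real.log (N + 1)) atTop
        (𝓝 Real.eulerMascheroniConstant) := by
      refine hg.congr fun N => by push_cast; ring_nf
    have := (hg'.sub (fder_sub_log hx)).add_const (deriv (Real.log ∘ Real.Gamma) x)
    simpa using this
  have := hsum.hasSum
  rwa [tendsto_nhds_unique h1 h2] at this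



lemma P_succ (x : ℝ) (n : ℕ) :
    Polynomial.eval (1 - x) (ascPochhammer ℝ (n + 1)) =
      Polynomial.eval (1 - x) (ascPochhammer ℝ n) * ((n : ℝ) + 1 - x) := by
  rw [ascPochhammer_succ_eval]
  ring

lemma P_nonneg {x : ℝ} (hx1 : x ≤ 1) (n : ℕ) :
    0 ≤ Polynomial.eval (1 - x) (ascPochhammer ℝ n) := by
  induction n with
  | zero => simp
  | succ n ih =>
    rw [P_succ]
    have : (0:ℝ) ≤ (n : ℝ) + 1 - x := by
      have : (0:ℝ) ≤ (n:ℝ) := n.cast_nonneg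
      linarith
    positivity

lemma kfact_le {n k : ℕ} : ((k:ℝ) + 1) * n.factorial * k.factorial ≤ ((n + k + 1).factorial : ℝ) := by
  have h : (k+1).factorial * n.factorial ≤ (n + k + 1).factorial := by
    rw [show n + k + 1 = k + 1 + n by ring]
    exact Nat.le_of_dvd (k+1+n).factorial_pos (Nat.factorial_mul_factorial_dvd_factorial_add _ _)
  rw [Nat.factorial_succ] at h
  have h2 := (Nat.cast_le (α := ℝ)).mpr h
  push_cast at h2
  calc ((k:ℝ) + 1) * n.factorial * k.factorial
      = ((k:ℝ) + 1) * k.factorial * n.factorial := by ring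
    _ ≤ ((n + k + 1).factorial : ℝ) := h2

lemma nfact_le {n k : ℕ} : ((n+1).factorial : ℝ) * k.factorial ≤ ((n + k + 1).factorial : ℝ) := by
  have h : (n+1).factorial * k.factorial ≤ (n + 1 + k).factorial :=
    Nat.le_of_dvd (n + 1 + k).factorial_pos (Nat.factorial_mul_factorial_dvd_factorial_add _ _)
  have h3 : n + 1 + k = n + k + 1 := by ring
  rw [h3] at h
  exact_mod_cast h

lemma row_hasSum (x : ℝ) (n : ℕ) :
    HasSum (fun k : ℕ => Polynomial.eval (1 - x) (ascPochhammer ℝ (n + 1)) *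
        k.factorial / ((n + k + 2).factorial : ℝ))
      (c x (n + 1) / ((n : ℝ) + 1)) := by
  set a : ℕ → ℝ := fun k => (n.factorial * k.factorial : ℝ) / ((n + k + 1).factorial : ℝ)
    with ha
  have hfacpos : ∀ m : ℕ, (0:ℝ) < (m.factorial : ℝ) := fun m => by
    exact_mod_cast m.factorial_pos
  have hdiff : ∀ k, a k - a (k + 1) =
      (n.factorial : ℝ) * k.factorial * ((n:ℝ) + 1) / ((n + k + 2).factorial : ℝ) := by
    intro k
    have e1 : n + (k+1) + 1 = n + k + 2 := by ring
    have e2 : ((n + k + 2).factorial : ℝ) = ((n + k + 1).factorial : ℝ) * ((n:ℝ) + k + 2) := by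
      rw [show n + k + 2 = (n + k + 1) + 1 from rfl, Nat.factorial_succ]
      push_cast; ring
    have e3 : (((k+1).factorial : ℕ) : ℝ) = ((k:ℝ) + 1) * k.factorial := by
      rw [Nat.factorial_succ]; push_cast; ring
    have h1 : ((n+k+1).factorial:ℝ) ≠ 0 := (hfacpos _).ne'
    have h3 : ((n:ℝ) + k + 2) ≠ 0 := by positivity
    rw [ha]
    simp only [e1]
    rw [e2, e3]
    field_simp
    ring
  have hmono : ∀ k, a (k + 1) ≤ a k := by
    intro k
    have := hdiff k
    have h2 : (0:ℝ) ≤ (n.factorial : ℝ) * k.factorial * ((n:ℝ) + 1) / ((n + k + 2).factorial : ℝ) := by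
      positivity
    linarith
  have hnn : ∀ k, 0 ≤ a k := fun k => by rw [ha]; positivity
  have hlim : Tendsto a atTop (𝓝 0) := by
    refine squeeze_zero (g := fun k : ℕ => (n.factorial : ℝ) / ((k:ℝ) + 1)) hnn (fun k => ?_) (tendsto_aux _)
    · 
      rw [ha, div_le_div_iff₀ (by positivity) (by positivity)]
      calc (n.factorial : ℝ) * k.factorial * ((k:ℝ) + 1)
          = ((k:ℝ) + 1) * n.factorial * k.factorial := by ring
        _ ≤ ((n + k + 1).factorial : ℝ) := kfact_le
        _ = ((n + k + 1).factorial : ℝ) * 1 := (mul_one _).symm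
        _ ≤ ((n + k + 1).factorial : ℝ) * (n.factorial : ℝ) := by
            have := hfacpos n
            have h1 : (1:ℝ) ≤ (n.factorial : ℝ) := by exact_mod_cast n.factorial_pos
            nlinarith [hfacpos (n+k+1)]
        _ = (n.factorial : ℝ) * ((n + k + 1).factorial : ℝ) := mul_comm _ _
  have htel := hasSum_telescope hmono hnn hlim
  have ha0 : a 0 = (n.factorial : ℝ) / ((n+1).factorial : ℝ) := by
    rw [ha]; simp
  have := htel.mul_left (c x (n + 1))
  have hterm : ∀ k, c x (n + 1) * (a k - a (k + 1)) =
      Polynomial.eval (1 - x) (ascPochhammer ℝ (n + 1)) * k.factorial /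
        ((n + k + 2).factorial : ℝ) := by
    intro k
    rw [hdiff k, c, Nat.factorial_succ]
    have h1 := hfacpos n
    have h2 := hfacpos (n + k + 2)
    push_cast
    field_simp
  have hval : c x (n + 1) * a 0 = c x (n + 1) / ((n:ℝ) + 1) := by
    rw [ha]
    simp only [Nat.add_zero, Nat.factorial_zero, Nat.cast_one, mul_one]
    rw [Nat.factorial_succ]
    have h1 := hfacpos n
    push_cast
    field_simp
  rw [hval] at this
  exact this.congr_fun (fun k => (hterm k).symm)



lemma col_hasSum {x : ℝ} (hx : 0 < x) (hx1 : x ≤ 1) (k : ℕ) :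
    HasSum (fun n : ℕ => Polynomial.eval (1 - x) (ascPochhammer ℝ (n + 1)) *
        k.factorial / ((n + k + 2).factorial : ℝ))
      (1 / (x + k) - 1 / ((k:ℝ) + 1)) := by
  have hfacpos : ∀ m : ℕ, (0:ℝ) < (m.factorial : ℝ) := fun m => by
    exact_mod_cast m.factorial_pos
  have hxk : (0:ℝ) < x + k := by positivity
  set b : ℕ → ℝ := fun n => Polynomial.eval (1 - x) (ascPochhammer ℝ (n + 1)) *
      k.factorial / ((x + k) * ((n + k + 1).factorial : ℝ)) with hb
  have hdiff : ∀ n, b n - b (n + 1) =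
      Polynomial.eval (1 - x) (ascPochhammer ℝ (n + 1)) * k.factorial /
        ((n + k + 2).factorial : ℝ) := by
    intro n
    have e1 : n + 1 + k + 1 = n + k + 2 := by ring
    have e2 : ((n + k + 2).factorial : ℝ) = ((n + k + 1).factorial : ℝ) * ((n:ℝ) + k + 2) := by
      rw [show n + k + 2 = (n + k + 1) + 1 from rfl, Nat.factorial_succ]
      push_cast; ring
    have h1 : ((n+k+1).factorial:ℝ) ≠ 0 := (hfacpos _).ne'
    have h3 : ((n:ℝ) + k + 2) ≠ 0 := by positivity
    rw [hb]
    simp only [e1]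
    rw [P_succ x (n + 1), e2]
    push_cast
    field_simp
    ring
  have hnn : ∀ n, 0 ≤ b n := by
    intro n
    rw [hb]
    have := P_nonneg hx1 (n + 1)
    positivity
  have hmono : ∀ n, b (n + 1) ≤ b n := by
    intro n
    have h := hdiff n
    have h2 : 0 ≤ Polynomial.eval (1 - x) (ascPochhammer ℝ (n + 1)) * k.factorial /
        ((n + k + 2).factorial : ℝ) := by
      have := P_nonneg hx1 (n + 1)
      positivity
    linarith
  have hlim : Tendsto b atTop (𝓝 0) := by
    refine squeeze_zero (g := fun n : ℕ => c x (n + 1) / (x + k)) hnn (fun n => ?_) ?_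
    · rw [hb]
      simp only [c]
      rw [div_div, div_le_div_iff₀ (by positivity) (by positivity)]
      have hP := P_nonneg hx1 (n + 1)
      have key : (((n+1).factorial:ℝ)) * k.factorial ≤ ((n + k + 1).factorial : ℝ) := nfact_le
      nlinarith [mul_le_mul_of_nonneg_left key (mul_nonneg hP hxk.le)]
    · have h1 := (c_tendsto_zero hx).comp (tendsto_add_atTop_nat 1)
      have := h1.div_const (x + k)
      simpa using this
  have htel := hasSum_telescope hmono hnn hlim
  have hb0 : b 0 = 1 / (x + k) - 1 / ((k:ℝ) + 1) := by
    rw [hb]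
    dsimp only
    rw [show (0:ℕ) + 1 = 1 from rfl, ascPochhammer_one, Polynomial.eval_X]
    rw [show (0:ℕ) + k + 1 = k + 1 from by ring, Nat.factorial_succ]
    have h1 : ((k.factorial :ℕ):ℝ) ≠ 0 := (hfacpos _).ne'
    have h2 : ((k:ℝ) + 1) ≠ 0 := by positivity
    push_cast
    field_simp
    ring
  rw [hb0] at htel
  exact htel.congr_fun (fun n => (hdiff n).symm)


lemma base_case {x : ℝ} (hx : 0 < x) (hx1 : x ≤ 1) :
    HasSum (fun n : ℕ => c x (n + 1) / ((n:ℝ) + 1))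
      (-(Real.eulerMascheroniConstant + deriv (Real.log ∘ Real.Gamma) x)) := by
  set F : ℕ × ℕ → ℝ := fun p =>
    Polynomial.eval (1 - x) (ascPochhammer ℝ (p.2 + 1)) * (p.1).factorial /
      ((p.2 + p.1 + 2).factorial : ℝ) with hF
  have hFnn : 0 ≤ F := by
    intro p
    have h1 := P_nonneg hx1 (p.2 + 1)
    have h2 : (0:ℝ) < ((p.2 + p.1 + 2).factorial : ℝ) := by exact_mod_cast Nat.factorial_pos _
    have h3 : (0:ℝ) ≤ ((p.1).factorial : ℝ) := by positivity
    exact div_nonneg (mul_nonneg h1 h3) h2.le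
  have hcols : ∀ k : ℕ, HasSum (fun n => F (k, n)) (1 / (x + k) - 1 / ((k:ℝ) + 1)) :=
    fun k => col_hasSum hx hx1 k
  have hneg' : HasSum (fun k : ℕ => 1 / (x + k) - 1 / ((k:ℝ) + 1))
      (-(Real.eulerMascheroniConstant + deriv (Real.log ∘ Real.Gamma) x)) :=
    (hasSum_inv_series hx).neg.congr_fun (fun k => by ring)
  have hsumm : Summable F := by
    rw [summable_prod_of_nonneg hFnn]
    exact ⟨fun k => (hcols k).summable,
      hneg'.summable.congr fun k => ((hcols k).tsum_eq).symm⟩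
  have hFh := hsumm.hasSum
  have hTcols : HasSum (fun k : ℕ => 1 / (x + k) - 1 / ((k:ℝ) + 1)) (∑' p, F p) :=
    hFh.prod_fiberwise hcols
  have hT : (∑' p, F p) = -(Real.eulerMascheroniConstant +
      deriv (Real.log ∘ Real.Gamma) x) := hTcols.unique hneg'
  have hswap : HasSum (fun p : ℕ × ℕ => F (p.2, p.1)) (∑' p, F p) :=
    ((Equiv.prodComm ℕ ℕ).hasSum_iff).mpr hFh
  have hrows : ∀ n : ℕ, HasSum (fun k => F (k, n)) (c x (n + 1) / ((n:ℝ) + 1)) :=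
    fun n => row_hasSum x n
  have final := hswap.prod_fiberwise hrows
  rwa [hT] at final

lemma c_shift (x : ℝ) (n : ℕ) : c (x + 1) (n + 1) = c x (n + 1) - c x n := by
  have hfac : ((n+1).factorial : ℝ) = ((n:ℝ) + 1) * n.factorial := by
    rw [Nat.factorial_succ]; push_cast; ring
  have hfpos : (0:ℝ) < (n.factorial : ℝ) := by exact_mod_cast n.factorial_pos
  have e : (1 : ℝ) - (x + 1) + 1 = 1 - x := by ring
  have h1 : Polynomial.eval (1 - (x + 1)) (ascPochhammer ℝ (n + 1)) =
      (-x) * Polynomial.eval (1 - x) (ascPochhammer ℝ n) := by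
    rw [ascPochhammer_succ_left, Polynomial.eval_mul, Polynomial.eval_X, Polynomial.eval_comp,
      Polynomial.eval_add, Polynomial.eval_X, Polynomial.eval_one, e]
    ring
  simp only [c]
  rw [h1, P_succ, hfac]
  field_simp
  ring

lemma step_lemma {x : ℝ} (hx : 0 < x)
    (h : HasSum (fun n : ℕ => c x (n + 1) / ((n:ℝ) + 1))
      (-(Real.eulerMascheroniConstant + deriv (Real.log ∘ Real.Gamma) x))) :
    HasSum (fun n : ℕ => c (x + 1) (n + 1) / ((n:ℝ) + 1))
      (-(Real.eulerMascheroniConstant + deriv (Real.log ∘ Real.Gamma) (x + 1))) := by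
  have h2 := h.sub (waring hx)
  have hterm : ∀ n : ℕ, c (x + 1) (n + 1) / ((n:ℝ) + 1) =
      c x (n + 1) / ((n:ℝ) + 1) - c x n / ((n:ℝ) + 1) := by
    intro n
    rw [c_shift]
    ring
  have hval : -(Real.eulerMascheroniConstant + deriv (Real.log ∘ Real.Gamma) x) - x⁻¹ =
      -(Real.eulerMascheroniConstant + deriv (Real.log ∘ Real.Gamma) (x + 1)) := by
    rw [fder_rec hx, one_div]
    ring
  rw [hval] at h2
  exact h2.congr_fun hterm

lemma all_x : ∀ n : ℕ, ∀ x : ℝ, 0 < x → x ≤ n + 1 →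
    HasSum (fun m : ℕ => c x (m + 1) / ((m:ℝ) + 1))
      (-(Real.eulerMascheroniConstant + deriv (Real.log ∘ Real.Gamma) x)) := by
  intro n
  induction n with
  | zero =>
    intro x hx hx1
    exact base_case hx (by exact_mod_cast (by simpa using hx1))
  | succ n ih =>
    intro x hx hxn
    by_cases h1 : x ≤ 1
    · exact base_case hx h1
    · push_neg at h1
      have h2 := ih (x - 1) (by linarith) (by push_cast at hxn ⊢; linarith)
      have h3 := step_lemma (by linarith : (0:ℝ) < x - 1) h2
      rw [sub_add_cancel] at h3
      exact h3

end DGAux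

theorem real_digamma_hasSum_pochhammer (x : ℝ) (hx : 0 < x) :
    HasSum
      (fun n : ℕ =>
        Polynomial.eval (1 - x) (ascPochhammer ℝ (n + 1)) /
          (((n : ℝ) + 1) * ((n + 1).factorial : ℝ)))
      (-Real.eulerMascheroniConstant - deriv Real.Gamma x / Real.Gamma x) := by
  have h := DGAux.all_x ⌈x⌉₊ x hx (by have := Nat.le_ceil x; push_cast; linarith)
  have hψ : deriv (Real.log ∘ Real.Gamma) x = deriv Real.Gamma x / Real.Gamma x := by
    rw [show Real.log ∘ Real.Gamma = fun y => Real.log (Real.Gamma y) from rfl,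
      deriv.log (DGAux.gamma_diff hx) (Real.Gamma_pos_of_pos hx).ne']
  have hv : -(Real.eulerMascheroniConstant + deriv (Real.log ∘ Real.Gamma) x) =
      -Real.eulerMascheroniConstant - deriv Real.Gamma x / Real.Gamma x := by
    rw [hψ]; ring
  rw [hv] at h
  refine h.congr_fun fun n => ?_
  simp only [DGAux.c, div_div]
  rw [mul_comm]
end
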